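/- Let F ⊆ C([n],k) be a shifted (initial) family, let q < n be a positive integer, and let P ⊆ R ⊆ [q] with |R| ≤ k. Then |F(P, [q]∖P-avoiding)| / C(n-q, k-|P|) ≤ |F(R, [q]∖R-avoiding)| / C(n-q, k-|R|), where F(P, [q]∖P-avoiding) = {F∖[q] : F ∈ F, F ∩ [q] = P}. -/

import Mathlib

/-- The shifting partial order on finite sets of naturals. -/
def prec (A B : Finset ℕ) : Prop :=
  A.card = B.card ∧
    ∀ i < A.card, (A.sort (· ≤ ·)).getD i 0 ≤ (B.sort (· ≤ ·)).getD i 0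

/-- A family of k-subsets of [n] is shifted (initial). -/
def IsShifted (n k : ℕ) (F : Finset (Finset ℕ)) : Prop :=
  ∀ A ∈ (Finset.Icc 1 n).powersetCard k, ∀ B ∈ F, prec A B → A ∈ F

/-- `trace F q P = {F ∖ [q] : F ∈ F, F ∩ [q] = P}`. -/
def trace (F : Finset (Finset ℕ)) (q : ℕ) (P : Finset ℕ) : Finset (Finset ℕ) :=
  (F.filter (fun A => A ∩ Finset.Icc 1 q = P)).image (fun A => A \ Finset.Icc 1 q)

lemma list_getD_le_iff (x : ℕ) : ∀ (L : List ℕ), L.Pairwise (· ≤ ·) → ∀ i : ℕ, i < L.length →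
    (L.getD i 0 ≤ x ↔ i < (L.filter (fun a => a ≤ x)).length)
  | [], _, i, hi => by simp at hi
  | a :: L, hs, i, hi => by
    obtain ⟨ha, hL⟩ := List.pairwise_cons.mp hs
    cases i with
    | zero =>
      simp only [List.getD_cons_zero]
      constructor
      · intro hax
        simp [List.filter_cons, hax]
      · intro hlen
        obtain ⟨b, hb⟩ := List.exists_mem_of_length_pos hlen
        have hbx : b ≤ x := by
          have := List.of_mem_filter hb
          simpa using this
        have hab : a ≤ b := by
          rcases List.mem_cons.mp (List.mem_of_mem_filter hb) with rfl | h
          · exact le_rfl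
          · exact ha b h
        exact hab.trans hbx
    | succ i =>
      simp only [List.getD_cons_succ]
      have hi' : i < L.length := by simpa using hi
      by_cases hax : a ≤ x
      · rw [list_getD_le_iff x L hL i hi']
        simp [List.filter_cons, hax, Nat.succ_lt_succ_iff]
      · have hLf : L.filter (fun a => a ≤ x) = [] := by
          apply List.filter_eq_nil_iff.mpr
          intro b hb
          simp only [decide_eq_true_eq]
          intro hbx
          exact hax ((ha b hb).trans hbx)
        have hmem : L.getD i 0 ∈ L := by
          rw [List.getD_eq_getElem _ _ hi']
          exact List.getElem_mem _
        simp only [List.filter_cons, hax]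
        rw [if_neg (by simp [hax]), hLf]
        simp only [List.length_nil, Nat.not_lt_zero, iff_false]
        intro h
        exact absurd ((ha _ hmem).trans h) hax

lemma finset_getD_le_iff (S : Finset ℕ) (x i : ℕ) (hi : i < S.card) :
    ((S.sort (· ≤ ·)).getD i 0 ≤ x ↔ i < (S.filter (fun a => a ≤ x)).card) := by
  have h1 : (S.filter (fun a => a ≤ x)).card
      = ((S.sort (· ≤ ·)).filter (fun a => a ≤ x)).length := by
    have : (S.filter (fun a => a ≤ x)).card = Multiset.countP (fun a => a ≤ x) S.val := by
      simp [Finset.filter, Finset.card, Multiset.countP_eq_card_filter]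
    rw [this, ← Finset.sort_eq (s := S) (r := (· ≤ ·)), ← List.countP_eq_length_filter]
    exact Multiset.coe_countP _ _
  rw [h1]
  exact list_getD_le_iff x _ (Finset.pairwise_sort (s := S) (r := (· ≤ ·))) i (by rwa [Finset.length_sort])

lemma prec_of_counts (B A : Finset ℕ) (hcard : B.card = A.card)
    (h : ∀ x, (A.filter (fun a => a ≤ x)).card ≤ (B.filter (fun a => a ≤ x)).card) :
    prec B A := by
  refine ⟨hcard, fun i hi => ?_⟩
  have hiA : i < A.card := hcard ▸ hi
  set x := (A.sort (· ≤ ·)).getD i 0 with hx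
  have h1 : i < (A.filter (fun a => a ≤ x)).card :=
    (finset_getD_le_iff A x i hiA).mp le_rfl
  exact (finset_getD_le_iff B x i hi).mpr (lt_of_lt_of_le h1 (h x))

lemma trace_mem {F : Finset (Finset ℕ)} {q : ℕ} {P G : Finset ℕ} :
    G ∈ trace F q P ↔ ∃ A ∈ F, A ∩ Finset.Icc 1 q = P ∧ A \ Finset.Icc 1 q = G := by
  simp [trace, Finset.mem_image, Finset.mem_filter, and_assoc]

lemma trace_sub {n k q : ℕ} {F : Finset (Finset ℕ)}
    (hF : F ⊆ (Finset.Icc 1 n).powersetCard k) {P G : Finset ℕ}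
    (hG : G ∈ trace F q P) :
    G ⊆ Finset.Icc (q+1) n ∧ G.card = k - P.card ∧ P.card ≤ k := by
  obtain ⟨A, hA, hint, hsd⟩ := trace_mem.mp hG
  obtain ⟨hAsub, hAcard⟩ := Finset.mem_powersetCard.mp (hF hA)
  refine ⟨?_, ?_, ?_⟩
  · intro x hx
    rw [← hsd] at hx
    obtain ⟨hxA, hxq⟩ := Finset.mem_sdiff.mp hx
    have := Finset.mem_Icc.mp (hAsub hxA)
    rw [Finset.mem_Icc] at hxq
    exact Finset.mem_Icc.mpr (by omega)
  · have := Finset.card_sdiff_add_card_inter A (Finset.Icc 1 q)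
    rw [hsd, hint, hAcard] at this
    omega
  · rw [← hint, ← hAcard]
    exact Finset.card_le_card (Finset.inter_subset_left)

lemma key_lemma {n k q : ℕ} (hq : q < n) {F : Finset (Finset ℕ)}
    (hF : F ⊆ (Finset.Icc 1 n).powersetCard k) (hsh : IsShifted n k F)
    {P R : Finset ℕ} (hPR : P ⊆ R) (hR : R ⊆ Finset.Icc 1 q) (hRk : R.card ≤ k)
    {G : Finset ℕ} (hG : G ∈ trace F q P) {H : Finset ℕ} (hH : H ⊆ G)
    (hHcard : H.card = k - R.card) : H ∈ trace F q R := by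
  obtain ⟨A, hA, hint, hsd⟩ := trace_mem.mp hG
  obtain ⟨hGsub, hGcard, hPk⟩ := trace_sub hF hG
  obtain ⟨hAsub, hAcard⟩ := Finset.mem_powersetCard.mp (hF hA)
  have hPRc : P.card ≤ R.card := Finset.card_le_card hPR
  have hHJ : H ⊆ Finset.Icc (q+1) n := hH.trans hGsub
  have hRq : ∀ x ∈ R, x ≤ q := fun x hx => (Finset.mem_Icc.mp (hR hx)).2
  have hHq : ∀ x ∈ H, q + 1 ≤ x := fun x hx => (Finset.mem_Icc.mp (hHJ hx)).1
  have hdisj : Disjoint R H := Finset.disjoint_left.mpr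
    (fun x hxR hxH => by have := hRq x hxR; have := hHq x hxH; omega)
  have hdisjPG : Disjoint P G := Finset.disjoint_left.mpr (fun x hxP hxG => by
    have := (Finset.mem_Icc.mp (hR (hPR hxP))).2
    have := (Finset.mem_Icc.mp (hGsub hxG)).1
    omega)
  set B := R ∪ H with hB
  have hBcard : B.card = k := by
    rw [Finset.card_union_of_disjoint hdisj, hHcard]; omega
  have hAPG : A = P ∪ G := by
    rw [← hint, ← hsd]; rw [Finset.union_comm]; exact (Finset.sdiff_union_inter _ _).symm
  have hBsub : B ⊆ Finset.Icc 1 n := by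
    apply Finset.union_subset
    · exact hR.trans (Finset.Icc_subset_Icc_right hq.le)
    · exact hHJ.trans (Finset.Icc_subset_Icc_left (by omega))
  have hprec : prec B A := by
    apply prec_of_counts _ _ (by rw [hBcard, hAcard])
    intro x
    rw [hAPG, hB, Finset.filter_union, Finset.filter_union,
      Finset.card_union_of_disjoint (Finset.disjoint_filter_filter hdisjPG),
      Finset.card_union_of_disjoint (Finset.disjoint_filter_filter hdisj)]
    by_cases hx : x ≤ q
    · have hGf : G.filter (fun a => a ≤ x) = ∅ := Finset.filter_eq_empty_iff.mpr
        (fun {a} ha => by have := (Finset.mem_Icc.mp (hGsub ha)).1; omega)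
      have hHf : H.filter (fun a => a ≤ x) = ∅ := Finset.filter_eq_empty_iff.mpr
        (fun {a} ha => by have := hHq a ha; omega)
      rw [hGf, hHf]
      simp only [Finset.card_empty, add_zero]
      exact Finset.card_le_card (Finset.filter_subset_filter _ hPR)
    · have hPf : P.filter (fun a => a ≤ x) = P := Finset.filter_true_of_mem
        (fun a ha => by have := hRq a (hPR ha); omega)
      have hRf : R.filter (fun a => a ≤ x) = R := Finset.filter_true_of_mem
        (fun a ha => by have := hRq a ha; omega)
      rw [hPf, hRf]
      have hGH : G.filter (fun a => a ≤ x) ⊆ H.filter (fun a => a ≤ x) ∪ (G \ H) := by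
        intro a ha
        obtain ⟨haG, hax⟩ := Finset.mem_filter.mp ha
        by_cases haH : a ∈ H
        · exact Finset.mem_union_left _ (Finset.mem_filter.mpr ⟨haH, hax⟩)
        · exact Finset.mem_union_right _ (Finset.mem_sdiff.mpr ⟨haG, haH⟩)
      have h1 : (G.filter (fun a => a ≤ x)).card
          ≤ (H.filter (fun a => a ≤ x)).card + (G \ H).card :=
        le_trans (Finset.card_le_card hGH) (Finset.card_union_le _ _)
      have h2 : (G \ H).card = G.card - H.card := Finset.card_sdiff_of_subset hH
      omega
  have hBF : B ∈ F := hsh B (Finset.mem_powersetCard.mpr ⟨hBsub, hBcard⟩) A hA hprec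
  refine trace_mem.mpr ⟨B, hBF, ?_, ?_⟩
  · rw [hB, Finset.union_inter_distrib_right]
    have h1 : R ∩ Finset.Icc 1 q = R := Finset.inter_eq_left.mpr hR
    have h2 : H ∩ Finset.Icc 1 q = ∅ := Finset.eq_empty_of_forall_notMem (fun x hx => by
      obtain ⟨h1', h2'⟩ := Finset.mem_inter.mp hx
      have := hHq x h1'; have := (Finset.mem_Icc.mp h2').2; omega)
    rw [h1, h2, Finset.union_empty]
  · rw [hB, Finset.union_sdiff_distrib]
    have h1 : R \ Finset.Icc 1 q = ∅ := by
      rw [Finset.sdiff_eq_empty_iff_subset]; exact hR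
    have h2 : H \ Finset.Icc 1 q = H := by
      rw [Finset.sdiff_eq_self_iff_disjoint]
      exact Finset.disjoint_left.mpr (fun x hx hx' => by
        have := hHq x hx; have := (Finset.mem_Icc.mp hx').2; omega)
    rw [h1, h2, Finset.empty_union]

lemma card_supersets {J H : Finset ℕ} (hHJ : H ⊆ J) {s : ℕ} (hs : H.card ≤ s) :
    ((J.powersetCard s).filter (fun G => H ⊆ G)).card
      = (J.card - H.card).choose (s - H.card) := by
  rw [← Finset.card_sdiff_of_subset hHJ, ← Finset.card_powersetCard]
  apply Finset.card_nbij' (fun G => G \ H) (fun T => T ∪ H)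
  · intro G hG
    obtain ⟨hG1, hG2⟩ := Finset.mem_filter.mp hG
    obtain ⟨hGJ, hGc⟩ := Finset.mem_powersetCard.mp hG1
    refine Finset.mem_powersetCard.mpr ⟨Finset.sdiff_subset_sdiff hGJ le_rfl, ?_⟩
    rw [Finset.card_sdiff_of_subset hG2, hGc]
  · intro T hT
    obtain ⟨hTJ, hTc⟩ := Finset.mem_powersetCard.mp hT
    have hTH : Disjoint T H := Finset.disjoint_left.mpr (fun x hx hx' =>
      (Finset.mem_sdiff.mp (hTJ hx)).2 hx')
    refine Finset.mem_filter.mpr ⟨Finset.mem_powersetCard.mpr ⟨?_, ?_⟩, Finset.subset_union_right⟩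
    · exact Finset.union_subset (hTJ.trans Finset.sdiff_subset) hHJ
    · rw [Finset.card_union_of_disjoint hTH, hTc]
      omega
  · intro G hG
    exact Finset.sdiff_union_of_subset (Finset.mem_filter.mp hG).2
  · intro T hT
    obtain ⟨hTJ, hTc⟩ := Finset.mem_powersetCard.mp hT
    have hTH : Disjoint T H := Finset.disjoint_left.mpr (fun x hx hx' =>
      (Finset.mem_sdiff.mp (hTJ hx)).2 hx')
    show (T ∪ H) \ H = T
    rw [Finset.union_sdiff_distrib, Finset.sdiff_self, Finset.union_empty,
      Finset.sdiff_eq_self_iff_disjoint.mpr hTH]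

/-- Lemma 2.5: monotonicity of normalized traces for initial families. -/
theorem stmt9 (n k q : ℕ) (hq0 : 0 < q) (hq : q < n)
    (F : Finset (Finset ℕ))
    (hF : F ⊆ (Finset.Icc 1 n).powersetCard k)
    (hsh : IsShifted n k F)
    (P R : Finset ℕ) (hPR : P ⊆ R) (hR : R ⊆ Finset.Icc 1 q) (hRk : R.card ≤ k) :
    ((trace F q P).card : ℝ) / ((n - q).choose (k - P.card))
      ≤ ((trace F q R).card : ℝ) / ((n - q).choose (k - R.card)) := by
  rcases (trace F q P).eq_empty_or_nonempty with hemp | ⟨G0, hG0⟩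
  · rw [hemp]
    simp only [Finset.card_empty, Nat.cast_zero, zero_div]
    positivity
  set J := Finset.Icc (q+1) n with hJ
  set m := n - q with hm
  set s := k - P.card with hs
  set s' := k - R.card with hs'
  have hJcard : J.card = m := by rw [hJ, Nat.card_Icc]; omega
  obtain ⟨hG0J, hG0c, hPk⟩ := trace_sub hF hG0
  have hPRc : P.card ≤ R.card := Finset.card_le_card hPR
  have hsm : s ≤ m := by
    have h := Finset.card_le_card hG0J
    rw [hG0c, Nat.card_Icc] at h
    rw [hs, hm]
    omega
  have hs's : s' ≤ s := by omega
  -- the trace of P lives in J.powersetCard s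
  have htrP : trace F q P ⊆ J.powersetCard s := fun G hG => by
    obtain ⟨h1, h2, _⟩ := trace_sub hF hG
    exact Finset.mem_powersetCard.mpr ⟨h1, h2⟩
  -- the main counting inequality
  have hcount : (trace F q P).card * s.choose s'
      ≤ (trace F q R).card * (m - s').choose (s - s') := by
    have step1 : (trace F q P).card * s.choose s'
        = ∑ G ∈ trace F q P, ((trace F q R).filter (fun H => H ⊆ G)).card := by
      rw [Finset.sum_congr rfl (fun G hG => ?_), Finset.sum_const, smul_eq_mul]
      have hfe : (trace F q R).filter (fun H => H ⊆ G) = G.powersetCard s' := by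
        ext H
        simp only [Finset.mem_filter, Finset.mem_powersetCard]
        constructor
        · rintro ⟨hH1, hH2⟩
          exact ⟨hH2, (trace_sub hF hH1).2.1⟩
        · rintro ⟨hH1, hH2⟩
          exact ⟨key_lemma hq hF hsh hPR hR hRk hG hH1 hH2, hH1⟩
      rw [hfe, Finset.card_powersetCard, (trace_sub hF hG).2.1]
    have step2 : ∑ G ∈ trace F q P, ((trace F q R).filter (fun H => H ⊆ G)).card
        = ∑ H ∈ trace F q R, ((trace F q P).filter (fun G => H ⊆ G)).card := by
      simp only [Finset.card_filter]
      exact Finset.sum_comm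
    have step3 : ∀ H ∈ trace F q R,
        ((trace F q P).filter (fun G => H ⊆ G)).card ≤ (m - s').choose (s - s') := by
      intro H hH
      obtain ⟨hHJ, hHc, _⟩ := trace_sub hF hH
      calc ((trace F q P).filter (fun G => H ⊆ G)).card
          ≤ ((J.powersetCard s).filter (fun G => H ⊆ G)).card :=
            Finset.card_le_card (Finset.filter_subset_filter _ htrP)
        _ = (J.card - H.card).choose (s - H.card) :=
            card_supersets hHJ (by omega)
        _ = (m - s').choose (s - s') := by rw [hJcard, hHc]
    calc (trace F q P).card * s.choose s'
        = ∑ H ∈ trace F q R, ((trace F q P).filter (fun G => H ⊆ G)).card := by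
          rw [step1, step2]
      _ ≤ ∑ _H ∈ trace F q R, (m - s').choose (s - s') :=
          Finset.sum_le_sum step3
      _ = (trace F q R).card * (m - s').choose (s - s') := by
          rw [Finset.sum_const, smul_eq_mul]
  -- convert to the real inequality
  have hchoose := Nat.choose_mul (n := m) (k := s) (s := s') hs's
  have hC : 0 < (m - s').choose (s - s') := Nat.choose_pos (by omega)
  have hnat : (trace F q P).card * m.choose s' ≤ (trace F q R).card * m.choose s := by
    have h2 := Nat.mul_le_mul_right (m.choose s) hcount
    have h1 : (trace F q P).card * m.choose s' * ((m - s').choose (s - s'))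
        ≤ (trace F q R).card * m.choose s * ((m - s').choose (s - s')) := by
      calc (trace F q P).card * m.choose s' * ((m - s').choose (s - s'))
          = (trace F q P).card * (m.choose s' * ((m - s').choose (s - s'))) := by ring
        _ = (trace F q P).card * (m.choose s * s.choose s') := by rw [← hchoose]
        _ = (trace F q P).card * s.choose s' * m.choose s := by ring
        _ ≤ (trace F q R).card * (m - s').choose (s - s') * m.choose s := h2
        _ = (trace F q R).card * m.choose s * ((m - s').choose (s - s')) := by ring
    exact Nat.le_of_mul_le_mul_right h1 hC
  have hcs : 0 < (m.choose s : ℝ) := by exact_mod_cast Nat.choose_pos hsm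
  have hcs' : 0 < (m.choose s' : ℝ) := by exact_mod_cast Nat.choose_pos (hs's.trans hsm)
  rw [div_le_div_iff₀ hcs hcs']
  exact_mod_cast hnat
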